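/- For x > 0 let φ(x) = (1/(2cosh²x))·(1 + sinh(2x)/(2x)). Then φ : (0,∞) → (0,∞) extends continuously to φ(0)=1, is strictly decreasing with limit 0 at ∞ on the relevant range, so that for each K/S₀ ∈ (0,1) the equation φ(x) = K/S₀ has a unique solution x > 0. -/

import Mathlib

open Real Filter

/-- The function `φ(x) = (1/(2cosh²x))·(1 + sinh(2x)/(2x))` from equation (19). -/
noncomputable def phiSqrt (x : ℝ) : ℝ :=
  1 / (2 * Real.cosh x ^ 2) * (1 + Real.sinh (2 * x) / (2 * x))

lemma phi_deriv {x : ℝ} (hx : 0 < x) :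
    HasDerivAt phiSqrt
      ((x * Real.cosh x - 2 * x ^ 2 * Real.sinh x - Real.sinh x * Real.cosh x ^ 2)
        / (2 * x ^ 2 * Real.cosh x ^ 3)) x := by
  have hc := Real.cosh_pos x
  have hxne : x ≠ 0 := hx.ne'
  have hcne : Real.cosh x ≠ 0 := hc.ne'
  have h1 : HasDerivAt (fun x => 2 * Real.cosh x ^ 2)
      (2 * (2 * Real.cosh x ^ 1 * Real.sinh x)) x :=
    ((Real.hasDerivAt_cosh x).pow 2).const_mul 2
  have hfne : (2 * Real.cosh x ^ 2) ≠ 0 := by positivity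
  have h2 : HasDerivAt (fun x => 1 / (2 * Real.cosh x ^ 2))
      (-(2 * (2 * Real.cosh x ^ 1 * Real.sinh x)) / (2 * Real.cosh x ^ 2) ^ 2) x := by
    refine (h1.inv hfne).congr_of_eventuallyEq (Filter.Eventually.of_forall fun y => ?_)
    simp [one_div]
  have h4 : HasDerivAt (fun x : ℝ => 2 * x) 2 x := by
    simpa using (hasDerivAt_id x).const_mul 2
  have h3 : HasDerivAt (fun x : ℝ => Real.sinh (2 * x)) (Real.cosh (2 * x) * 2) x := by
    exact (Real.hasDerivAt_sinh (2 * x)).comp x h4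
  have h2xne : (2 * x) ≠ 0 := by positivity
  have h5 : HasDerivAt (fun x : ℝ => 1 + Real.sinh (2 * x) / (2 * x))
      ((Real.cosh (2 * x) * 2 * (2 * x) - Real.sinh (2 * x) * 2) / (2 * x) ^ 2) x :=
    (h3.div h4 h2xne).const_add 1
  have := h2.mul h5
  refine this.congr_deriv ?_
  symm
  rw [Real.cosh_two_mul, Real.sinh_two_mul]
  field_simp
  linear_combination (-(x * Real.cosh x)) * Real.cosh_sq_sub_sinh_sq x

lemma phi_anti : StrictAntiOn phiSqrt (Set.Ioi 0) := by
  apply strictAntiOn_of_deriv_neg (convex_Ioi 0)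
  · exact fun x hx => ((phi_deriv hx).differentiableAt.continuousAt).continuousWithinAt
  · intro x hx
    rw [interior_Ioi, Set.mem_Ioi] at hx
    rw [(phi_deriv hx).deriv]
    have hc := Real.cosh_pos x
    have hs : 0 < Real.sinh x := (Real.sinh_pos_iff).2 hx
    have hkey : x < Real.sinh x * Real.cosh x := by
      have h1 : 2 * x < Real.sinh (2 * x) := (Real.self_lt_sinh_iff).2 (by linarith)
      rw [Real.sinh_two_mul] at h1; linarith
    apply div_neg_of_neg_of_pos
    · nlinarith [mul_lt_mul_of_pos_right hkey hc, mul_pos (mul_pos hx hx) hs]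
    · positivity

lemma phi_pos {x : ℝ} (hx : 0 < x) : 0 < phiSqrt x := by
  have hs : 0 < Real.sinh (2 * x) := (Real.sinh_pos_iff).2 (by linarith)
  have hc := Real.cosh_pos x
  unfold phiSqrt; positivity

lemma phi_le_one_div {x : ℝ} (hx : 0 < x) : phiSqrt x ≤ 1 / x := by
  have hc := Real.cosh_pos x
  have hc2 : (0:ℝ) < 2 * Real.cosh x ^ 2 := by positivity
  have h1 : 2 * x < Real.sinh (2 * x) := (Real.self_lt_sinh_iff).2 (by linarith)
  have h2 : Real.sinh (2 * x) < Real.cosh (2 * x) := Real.sinh_lt_cosh (2 * x)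
  have h3 : Real.cosh (2 * x) = 2 * Real.cosh x ^ 2 - 1 := by
    have := Real.cosh_sq_sub_sinh_sq x
    rw [Real.cosh_two_mul]; linarith
  rw [phiSqrt, one_div_mul_eq_div, div_le_div_iff₀ hc2 hx]
  have he : (1 + Real.sinh (2 * x) / (2 * x)) * x = x + Real.sinh (2 * x) / 2 := by
    field_simp
  rw [he]
  nlinarith

lemma phi_tendsto_zero : Tendsto phiSqrt atTop (nhds 0) := by
  apply tendsto_of_tendsto_of_tendsto_of_le_of_le' tendsto_const_nhds
    (show Tendsto (fun x : ℝ => 1 / x) atTop (nhds 0) by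
      simpa [one_div] using tendsto_inv_atTop_zero)
  · filter_upwards [eventually_gt_atTop (0:ℝ)] with x hx using (phi_pos hx).le
  · filter_upwards [eventually_gt_atTop (0:ℝ)] with x hx using phi_le_one_div hx

lemma phi_tendsto_one : Tendsto phiSqrt (nhdsWithin 0 (Set.Ioi 0)) (nhds 1) := by
  have hA : Tendsto (fun x : ℝ => 1 / (2 * Real.cosh x ^ 2))
      (nhdsWithin 0 (Set.Ioi 0)) (nhds (1/2)) := by
    have hca : ContinuousAt (fun x : ℝ => 1 / (2 * Real.cosh x ^ 2)) 0 := by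
      apply ContinuousAt.div continuousAt_const
        ((continuous_const.mul (Real.continuous_cosh.pow 2)).continuousAt)
      simp [Real.cosh_zero]
    have := hca.continuousWithinAt (s := Set.Ioi 0)
    simpa [ContinuousWithinAt, Real.cosh_zero] using this
  have hslope : Tendsto (fun y : ℝ => Real.sinh y / y)
      (nhdsWithin 0 {(0:ℝ)}ᶜ) (nhds 1) := by
    have h := Real.hasDerivAt_sinh 0
    rw [hasDerivAt_iff_tendsto_slope] at h
    rw [Real.cosh_zero] at h
    refine h.congr' ?_
    filter_upwards [self_mem_nhdsWithin] with y hy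
    simp [slope_def_field, Real.sinh_zero, div_eq_mul_inv]
  have hmap : Tendsto (fun x : ℝ => 2 * x) (nhdsWithin 0 (Set.Ioi 0))
      (nhdsWithin 0 {(0:ℝ)}ᶜ) := by
    apply tendsto_nhdsWithin_of_tendsto_nhds_of_eventually_within
    · have : Tendsto (fun x : ℝ => 2 * x) (nhds 0) (nhds 0) := by
        simpa using (continuous_mul_left (2:ℝ)).tendsto (0:ℝ)
      exact this.mono_left nhdsWithin_le_nhds
    · filter_upwards [self_mem_nhdsWithin] with x hx
      simp only [Set.mem_Ioi] at hx
      simp only [Set.mem_compl_iff, Set.mem_singleton_iff]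
      positivity
  have hB : Tendsto (fun x : ℝ => Real.sinh (2 * x) / (2 * x))
      (nhdsWithin 0 (Set.Ioi 0)) (nhds 1) := hslope.comp hmap
  have := hA.mul ((tendsto_const_nhds (x := (1:ℝ))).add hB)
  norm_num at this
  exact this.congr fun x => by unfold phiSqrt; ring

theorem stmt8 :
    Tendsto phiSqrt (nhdsWithin 0 (Set.Ioi 0)) (nhds 1) ∧
    StrictAntiOn phiSqrt (Set.Ioi 0) ∧
    Tendsto phiSqrt atTop (nhds 0) ∧
    ∀ r : ℝ, 0 < r → r < 1 → ∃! x : ℝ, 0 < x ∧ phiSqrt x = r := by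
  refine ⟨phi_tendsto_one, phi_anti, phi_tendsto_zero, fun r hr0 hr1 => ?_⟩
  obtain ⟨a, har, ha⟩ :=
    ((phi_tendsto_one.eventually (eventually_gt_nhds hr1)).and
      self_mem_nhdsWithin).exists
  replace ha : 0 < a := ha
  obtain ⟨b, hbr, hab⟩ :=
    ((phi_tendsto_zero.eventually (eventually_lt_nhds hr0)).and
      (eventually_gt_atTop a)).exists
  have hcont : ContinuousOn phiSqrt (Set.Icc a b) := fun x hx =>
    ((phi_deriv (lt_of_lt_of_le ha hx.1)).differentiableAt.continuousAt).continuousWithinAt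
  have hmem : r ∈ Set.Icc (phiSqrt b) (phiSqrt a) := ⟨hbr.le, har.le⟩
  obtain ⟨x, hxab, hxr⟩ := intermediate_value_Icc' hab.le hcont hmem
  have hx0 : 0 < x := lt_of_lt_of_le ha hxab.1
  refine ⟨x, ⟨hx0, hxr⟩, fun y ⟨hy0, hyr⟩ => ?_⟩
  exact phi_anti.injOn (Set.mem_Ioi.mpr hy0) (Set.mem_Ioi.mpr hx0) (by rw [hyr, hxr])
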